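/- Let 𝒳_0,…,𝒳_n and 𝒴_0,…,𝒴_n be Polish spaces, X = ∏_{i=0}^n 𝒳_i, Y = ∏_{i=0}^n 𝒴_i, and μ a Borel probability measure on X. If π₁ and π₂ are Borel probability measures on X × Y, each with first marginal equal to μ and each nonanticipative, then for every λ ∈ [0, 1] the mixture λ π₁ + (1−λ) π₂ also has first marginal μ and is nonanticipative; that is, the set of nonanticipative joint probability measures with fixed source marginal μ is convex. -/

import Mathlib

open MeasureTheory ProbabilityTheory MeasurableSpace
open scoped ENNReal NNReal

lemma condIndep_mix {Ω : Type*} (m' m₁ m₂ mF : MeasurableSpace Ω)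
    {mΩ : MeasurableSpace Ω} [StandardBorelSpace Ω]
    (hm'F : m' ≤ mF) (hm₂F : m₂ ≤ mF) (hFΩ : mF ≤ mΩ) (hm₁ : m₁ ≤ mΩ)
    (hm' : m' ≤ mΩ)
    (π₁ π₂ : Measure Ω) [IsProbabilityMeasure π₁] [IsProbabilityMeasure π₂]
    (hagree : ∀ s, MeasurableSet[mF] s → π₁ s = π₂ s)
    (lam : ℝ≥0) (hlam : lam ≤ 1)
    (h₁ : CondIndep m' m₁ m₂ hm' π₁)
    (h₂ : CondIndep m' m₁ m₂ hm' π₂) :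
    CondIndep m' m₁ m₂ hm' (lam • π₁ + (1 - lam) • π₂) := by
  have hm₂ : m₂ ≤ mΩ := hm₂F.trans hFΩ
  have hc : ∀ (c : ℝ≥0) (ν : Measure Ω), (c • ν : Measure Ω) = (c : ℝ≥0∞) • ν := by
    intro c ν
    refine Measure.ext fun s hs => ?_
    simp [Measure.smul_apply, smul_eq_mul]
  set π : Measure Ω := lam • π₁ + (1 - lam) • π₂ with hπ
  have hπ' : π = (lam : ℝ≥0∞) • π₁ + ((1 - lam : ℝ≥0) : ℝ≥0∞) • π₂ := by
    rw [hπ, hc, hc]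
  set a : ℝ := (lam : ℝ) with ha
  set b : ℝ := ((1 - lam : ℝ≥0) : ℝ) with hb
  have a_def : a + b = 1 := by
    rw [ha, hb, ← NNReal.coe_add, add_tsub_cancel_of_le hlam, NNReal.coe_one]
  -- trim equality
  have htrim : π₁.trim hm' = π₂.trim hm' := by
    refine @Measure.ext Ω m' _ _ fun s hs => ?_
    rw [trim_measurableSet_eq hm' hs, trim_measurableSet_eq hm' hs]
    exact hagree s (hm'F s hs)
  have hInt12 : ∀ (g : Ω → ℝ), StronglyMeasurable[m'] g → Integrable g π₁ → Integrable g π₂ :=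
    fun g hg hint => integrable_of_integrable_trim (hm := hm') (htrim ▸ hint.trim hm' hg)
  have hInt21 : ∀ (g : Ω → ℝ), StronglyMeasurable[m'] g → Integrable g π₂ → Integrable g π₁ :=
    fun g hg hint => integrable_of_integrable_trim (hm := hm') (htrim.symm ▸ hint.trim hm' hg)
  have hIntMix : ∀ (g : Ω → ℝ), Integrable g π₁ → Integrable g π₂ → Integrable g π := by
    intro g h1 h2
    rw [hπ']
    exact (h1.smul_measure ENNReal.coe_ne_top).add_measure (h2.smul_measure ENNReal.coe_ne_top)
  have hSet12 : ∀ (g : Ω → ℝ), StronglyMeasurable[m'] g → ∀ s, MeasurableSet[m'] s →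
      ∫ x in s, g x ∂π₁ = ∫ x in s, g x ∂π₂ := by
    intro g hg s hs
    rw [← integral_indicator (hm' s hs), ← integral_indicator (hm' s hs),
      integral_trim hm' (hg.indicator hs), integral_trim hm' (hg.indicator hs), htrim]
  have hsum : ∀ (g : Ω → ℝ) (s : Set Ω), Integrable g π₁ → Integrable g π₂ →
      ∫ x in s, g x ∂π = a * ∫ x in s, g x ∂π₁ + b * ∫ x in s, g x ∂π₂ := by
    intro g s h1 h2
    rw [hπ', Measure.restrict_add, Measure.restrict_smul, Measure.restrict_smul,
      integral_add_measure (h1.restrict.smul_measure ENNReal.coe_ne_top)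
        (h2.restrict.smul_measure ENNReal.coe_ne_top),
      integral_smul_measure, integral_smul_measure, ENNReal.coe_toReal, ENNReal.coe_toReal,
      smul_eq_mul, smul_eq_mul]
  have ae_mix : ∀ {q : Ω → Prop}, (∀ᵐ x ∂π₁, q x) → (∀ᵐ x ∂π₂, q x) → ∀ᵐ x ∂π, q x := by
    intro q h1 h2
    rw [hπ, ae_add_measure_iff]
    exact ⟨Measure.ae_smul_measure h1 lam, Measure.ae_smul_measure h2 (1 - lam)⟩
  haveI : SigmaFinite (π.trim hm') := (isFiniteMeasure_trim hm').toSigmaFinite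
  haveI : SigmaFinite (π₁.trim hm') := (isFiniteMeasure_trim hm').toSigmaFinite
  haveI : SigmaFinite (π₂.trim hm') := (isFiniteMeasure_trim hm').toSigmaFinite
  rw [condIndep_iff _ _ _ hm' hm₁ hm₂] at h₁ h₂ ⊢
  intro A B hA hB
  have hAm : MeasurableSet A := hm₁ A hA
  have hBm : MeasurableSet B := hm₂ B hB
  set fA : Ω → ℝ := A.indicator (fun _ => (1:ℝ)) with hfA
  set fB : Ω → ℝ := B.indicator (fun _ => (1:ℝ)) with hfB
  set fAB : Ω → ℝ := (A ∩ B).indicator (fun _ => (1:ℝ)) with hfAB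
  have hfA1 : Integrable fA π₁ := (integrable_const (1:ℝ)).indicator hAm
  have hfA2 : Integrable fA π₂ := (integrable_const (1:ℝ)).indicator hAm
  have hfB1 : Integrable fB π₁ := (integrable_const (1:ℝ)).indicator hBm
  have hfB2 : Integrable fB π₂ := (integrable_const (1:ℝ)).indicator hBm
  have hfABm : MeasurableSet (A ∩ B) := hAm.inter hBm
  have hfAB1 : Integrable fAB π₁ := (integrable_const (1:ℝ)).indicator hfABm
  have hfAB2 : Integrable fAB π₂ := (integrable_const (1:ℝ)).indicator hfABm
  -- set integrals of fB agree between π₁ and π₂ (since B is mF-measurable)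
  have hfBeq : ∀ s, MeasurableSet[m'] s → ∫ x in s, fB x ∂π₁ = ∫ x in s, fB x ∂π₂ := by
    intro s hs
    have h1 : ∀ μ : Measure Ω, ∫ x in s, fB x ∂μ = (μ.restrict s B).toReal := by
      intro μ
      rw [hfB, integral_indicator_const (1:ℝ) hBm, smul_eq_mul, mul_one]
      rfl
    rw [h1, h1, Measure.restrict_apply hBm, Measure.restrict_apply hBm,
      hagree (B ∩ s) ((hm₂F B hB).inter (hm'F s hs))]
  -- conditional expectations w.r.t. the two measures
  set gA1 : Ω → ℝ := π₁[fA|m'] with hgA1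
  set gA2 : Ω → ℝ := π₂[fA|m'] with hgA2
  set gB1 : Ω → ℝ := π₁[fB|m'] with hgB1
  set gB2 : Ω → ℝ := π₂[fB|m'] with hgB2
  have smA1 : StronglyMeasurable[m'] gA1 := stronglyMeasurable_condExp
  have smA2 : StronglyMeasurable[m'] gA2 := stronglyMeasurable_condExp
  have smB1 : StronglyMeasurable[m'] gB1 := stronglyMeasurable_condExp
  have smB2 : StronglyMeasurable[m'] gB2 := stronglyMeasurable_condExp
  have iA1 : Integrable gA1 π₁ := integrable_condExp
  have iA2 : Integrable gA2 π₂ := integrable_condExp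
  have iB1 : Integrable gB1 π₁ := integrable_condExp
  have iB2 : Integrable gB2 π₂ := integrable_condExp
  have iA1' : Integrable gA1 π₂ := hInt12 _ smA1 iA1
  have iA2' : Integrable gA2 π₁ := hInt21 _ smA2 iA2
  have iB1' : Integrable gB1 π₂ := hInt12 _ smB1 iB1
  have iB2' : Integrable gB2 π₁ := hInt21 _ smB2 iB2
  -- products from conditional independence
  have hprod1 : (π₁⟦A ∩ B|m'⟧) =ᵐ[π₁] gA1 * gB1 := h₁ A B hA hB
  have hprod2 : (π₂⟦A ∩ B|m'⟧) =ᵐ[π₂] gA2 * gB2 := h₂ A B hA hB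
  have smP1 : StronglyMeasurable[m'] (gA1 * gB1) := smA1.mul smB1
  have smP2 : StronglyMeasurable[m'] (gA2 * gB2) := smA2.mul smB2
  have iP1 : Integrable (gA1 * gB1) π₁ := integrable_condExp.congr hprod1
  have iP2 : Integrable (gA2 * gB2) π₂ := integrable_condExp.congr hprod2
  have iP1' : Integrable (gA1 * gB1) π₂ := hInt12 _ smP1 iP1
  have iP2' : Integrable (gA2 * gB2) π₁ := hInt21 _ smP2 iP2
  -- set integrals of the products equal set integrals of fAB
  have hsetP1 : ∀ s, MeasurableSet[m'] s →
      ∫ x in s, (gA1 * gB1) x ∂π₁ = ∫ x in s, fAB x ∂π₁ := by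
    intro s hs
    rw [setIntegral_congr_ae (hm' s hs) (hprod1.symm.mono fun x hx _ => hx),
      setIntegral_condExp hm' hfAB1 hs]
  have hsetP2 : ∀ s, MeasurableSet[m'] s →
      ∫ x in s, (gA2 * gB2) x ∂π₂ = ∫ x in s, fAB x ∂π₂ := by
    intro s hs
    rw [setIntegral_congr_ae (hm' s hs) (hprod2.symm.mono fun x hx _ => hx),
      setIntegral_condExp hm' hfAB2 hs]
  -- E3 : condexp of fB under π equals gB1
  have E3 : (π⟦B|m'⟧) =ᵐ[π] gB1 := by
    refine (ae_eq_condExp_of_forall_setIntegral_eq hm'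
      (hIntMix _ hfB1 hfB2)
      (fun s _ _ => (hIntMix _ iB1 iB1').integrableOn)
      (fun s hs _ => ?_) smB1.aestronglyMeasurable).symm
    rw [hsum _ s iB1 iB1', ← hSet12 _ smB1 s hs, setIntegral_condExp hm' hfB1 hs,
      hsum _ s hfB1 hfB2, hfBeq s hs]
  -- gB1 = gB2 a.e.
  have hB12 : gB1 =ᵐ[π₂] gB2 := by
    refine ae_eq_condExp_of_forall_setIntegral_eq hm' hfB2
      (fun s _ _ => iB1'.integrableOn) (fun s hs _ => ?_) smB1.aestronglyMeasurable
    rw [← hSet12 _ smB1 s hs, setIntegral_condExp hm' hfB1 hs, hfBeq s hs]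
  have hB21 : gB2 =ᵐ[π₁] gB1 := by
    refine ae_eq_condExp_of_forall_setIntegral_eq hm' hfB1
      (fun s _ _ => iB2'.integrableOn) (fun s hs _ => ?_) smB2.aestronglyMeasurable
    rw [hSet12 _ smB2 s hs, setIntegral_condExp hm' hfB2 hs, hfBeq s hs]
  have hBB : gB1 =ᵐ[π] gB2 := ae_mix hB21.symm hB12
  -- E2 : condexp of fA under π is the mixture
  have smGA : StronglyMeasurable[m'] (fun x => a * gA1 x + b * gA2 x) :=
    ((stronglyMeasurable_const.mul smA1).add (stronglyMeasurable_const.mul smA2))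
  have iGA1 : Integrable (fun x => a * gA1 x + b * gA2 x) π₁ :=
    (iA1.const_mul a).add (iA2'.const_mul b)
  have iGA2 : Integrable (fun x => a * gA1 x + b * gA2 x) π₂ :=
    (iA1'.const_mul a).add (iA2.const_mul b)
  have E2 : (π⟦A|m'⟧) =ᵐ[π] fun x => a * gA1 x + b * gA2 x := by
    refine (ae_eq_condExp_of_forall_setIntegral_eq hm'
      (hIntMix _ hfA1 hfA2)
      (fun s _ _ => (hIntMix _ iGA1 iGA2).integrableOn)
      (fun s hs _ => ?_) smGA.aestronglyMeasurable).symm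
    have expand : ∀ μ : Measure Ω, Integrable gA1 μ → Integrable gA2 μ →
        ∫ x in s, (a * gA1 x + b * gA2 x) ∂μ
          = a * ∫ x in s, gA1 x ∂μ + b * ∫ x in s, gA2 x ∂μ := by
      intro μ hi1 hi2
      rw [integral_add (hi1.integrableOn.const_mul a) (hi2.integrableOn.const_mul b),
        integral_const_mul, integral_const_mul]
    rw [hsum _ s iGA1 iGA2, expand π₁ iA1 iA2', expand π₂ iA1' iA2,
      ← hSet12 _ smA1 s hs, hSet12 _ smA2 s hs,
      setIntegral_condExp hm' hfA1 hs, setIntegral_condExp hm' hfA2 hs,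
      hsum _ s hfA1 hfA2]
    rw [← add_mul, a_def, one_mul]
  -- E1 : condexp of fAB under π is the mixture of products
  have smW : StronglyMeasurable[m'] (fun x => a * (gA1 * gB1) x + b * (gA2 * gB2) x) :=
    ((stronglyMeasurable_const.mul smP1).add (stronglyMeasurable_const.mul smP2))
  have iW1 : Integrable (fun x => a * (gA1 * gB1) x + b * (gA2 * gB2) x) π₁ :=
    (iP1.const_mul a).add (iP2'.const_mul b)
  have iW2 : Integrable (fun x => a * (gA1 * gB1) x + b * (gA2 * gB2) x) π₂ :=
    (iP1'.const_mul a).add (iP2.const_mul b)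
  have E1 : (π⟦A ∩ B|m'⟧) =ᵐ[π] fun x => a * (gA1 * gB1) x + b * (gA2 * gB2) x := by
    refine (ae_eq_condExp_of_forall_setIntegral_eq hm'
      (hIntMix _ hfAB1 hfAB2)
      (fun s _ _ => (hIntMix _ iW1 iW2).integrableOn)
      (fun s hs _ => ?_) smW.aestronglyMeasurable).symm
    have expand : ∀ μ : Measure Ω, Integrable (gA1 * gB1) μ → Integrable (gA2 * gB2) μ →
        ∫ x in s, (a * (gA1 * gB1) x + b * (gA2 * gB2) x) ∂μ
          = a * ∫ x in s, (gA1 * gB1) x ∂μ + b * ∫ x in s, (gA2 * gB2) x ∂μ := by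
      intro μ hi1 hi2
      rw [integral_add (hi1.integrableOn.const_mul a) (hi2.integrableOn.const_mul b),
        integral_const_mul, integral_const_mul]
    rw [hsum _ s iW1 iW2, expand π₁ iP1 iP2', expand π₂ iP1' iP2,
      ← hSet12 _ smP1 s hs, hSet12 _ smP2 s hs,
      hsetP1 s hs, hsetP2 s hs, hsum _ s hfAB1 hfAB2]
    rw [← add_mul, a_def, one_mul]
  -- combine
  refine E1.trans (Filter.EventuallyEq.trans ?_ (E2.mul E3).symm)
  filter_upwards [hBB] with x hx
  simp only [Pi.mul_apply]
  rw [← hx]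
  ring

/-- A joint probability measure `π` on `(∏ i ≤ n, 𝒳 i) × (∏ i ≤ n, 𝒴 i)` is nonanticipative if
for every `i < n` the σ-algebra generated by the coordinates `(Y_0,…,Y_i)` and the σ-algebra
generated by the coordinate `X_{i+1}` are conditionally independent given the σ-algebra
generated by the coordinates `(X_0,…,X_i)`. -/
def Nonanticipative (n : ℕ) (𝒳 𝒴 : ℕ → Type*)
    [∀ i, MeasurableSpace (𝒳 i)] [∀ i, TopologicalSpace (𝒳 i)]
    [∀ i, PolishSpace (𝒳 i)] [∀ i, BorelSpace (𝒳 i)] [∀ i, Nonempty (𝒳 i)]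
    [∀ i, MeasurableSpace (𝒴 i)] [∀ i, TopologicalSpace (𝒴 i)]
    [∀ i, PolishSpace (𝒴 i)] [∀ i, BorelSpace (𝒴 i)] [∀ i, Nonempty (𝒴 i)]
    (π : Measure ((∀ j : Fin (n+1), 𝒳 j) × (∀ j : Fin (n+1), 𝒴 j)))
    [IsFiniteMeasure π] : Prop :=
  ∀ i : ℕ, ∀ hi : i < n,
    CondIndep
      (⨆ j : Fin (n+1), ⨆ _ : (j : ℕ) ≤ i,
        MeasurableSpace.comap
          (fun p : (∀ j : Fin (n+1), 𝒳 j) × (∀ j : Fin (n+1), 𝒴 j) => p.1 j) inferInstance)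
      (⨆ j : Fin (n+1), ⨆ _ : (j : ℕ) ≤ i,
        MeasurableSpace.comap
          (fun p : (∀ j : Fin (n+1), 𝒳 j) × (∀ j : Fin (n+1), 𝒴 j) => p.2 j) inferInstance)
      (MeasurableSpace.comap
        (fun p : (∀ j : Fin (n+1), 𝒳 j) × (∀ j : Fin (n+1), 𝒴 j) => p.1 ⟨i + 1, by omega⟩)
        inferInstance)
      (iSup_le fun j => iSup_le fun _ =>
        ((measurable_pi_apply j).comp measurable_fst).comap_le)
      π

/-- the set of nonanticipative joint probability measures with fixed source
marginal `μ` is convex. -/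
theorem stmt_12 (n : ℕ) (hn : 1 ≤ n) (𝒳 𝒴 : ℕ → Type*)
    [∀ i, MeasurableSpace (𝒳 i)] [∀ i, TopologicalSpace (𝒳 i)]
    [∀ i, PolishSpace (𝒳 i)] [∀ i, BorelSpace (𝒳 i)] [∀ i, Nonempty (𝒳 i)]
    [∀ i, MeasurableSpace (𝒴 i)] [∀ i, TopologicalSpace (𝒴 i)]
    [∀ i, PolishSpace (𝒴 i)] [∀ i, BorelSpace (𝒴 i)] [∀ i, Nonempty (𝒴 i)]
    (μ : Measure (∀ j : Fin (n+1), 𝒳 j)) [IsProbabilityMeasure μ]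
    (π₁ π₂ : Measure ((∀ j : Fin (n+1), 𝒳 j) × (∀ j : Fin (n+1), 𝒴 j)))
    [IsProbabilityMeasure π₁] [IsProbabilityMeasure π₂]
    (h₁fst : π₁.map Prod.fst = μ) (h₂fst : π₂.map Prod.fst = μ)
    (h₁ : Nonanticipative n 𝒳 𝒴 π₁) (h₂ : Nonanticipative n 𝒳 𝒴 π₂)
    (lam : ℝ≥0) (hlam : lam ≤ 1) :
    (lam • π₁ + (1 - lam) • π₂).map Prod.fst = μ ∧
      Nonanticipative n 𝒳 𝒴 (lam • π₁ + (1 - lam) • π₂) := by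
  constructor
  · rw [Measure.map_add _ _ measurable_fst, Measure.map_smul, Measure.map_smul,
      h₁fst, h₂fst, ← add_smul, add_tsub_cancel_of_le hlam, one_smul]
  · intro i hi
    set Ω := (∀ j : Fin (n+1), 𝒳 j) × (∀ j : Fin (n+1), 𝒴 j)
    have hXle : ∀ j : Fin (n+1),
        MeasurableSpace.comap (fun p : Ω => p.1 j) inferInstance ≤
          MeasurableSpace.comap (Prod.fst : Ω → _) inferInstance := by
      intro j
      rw [show (fun p : Ω => p.1 j) = (fun x => x j) ∘ Prod.fst from rfl,
        ← MeasurableSpace.comap_comp]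
      exact MeasurableSpace.comap_mono (measurable_pi_apply j).comap_le
    have hagree : ∀ s, MeasurableSet[MeasurableSpace.comap (Prod.fst : Ω → _) inferInstance] s →
        π₁ s = π₂ s := by
      rintro s ⟨t, ht, rfl⟩
      rw [← Measure.map_apply measurable_fst ht, ← Measure.map_apply measurable_fst ht,
        h₁fst, h₂fst]
    exact condIndep_mix _ _ _
      (MeasurableSpace.comap (Prod.fst : Ω → _) inferInstance)
      (iSup_le fun j => iSup_le fun _ => hXle j)
      (hXle _)
      measurable_fst.comap_le
      (iSup_le fun j => iSup_le fun _ =>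
        ((measurable_pi_apply j).comp measurable_snd).comap_le)
      _ π₁ π₂ hagree lam hlam (h₁ i hi) (h₂ i hi)
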